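/- For positive semidefinite operators P, Q on C^n, the fidelity F(P,Q) = ‖√P √Q‖₁ equals the supremum of (1/2)Tr(X) + (1/2)Tr(X*) over all operators X on C^n for which the block operator [[P, X], [X*, Q]] is positive semidefinite. -/

import Mathlib

open Matrix Kronecker
open scoped ComplexOrder

/-- Trace norm `‖A‖₁ = Tr √(Aᴴ A)` of a complex matrix. -/
noncomputable def traceNorm {α β : Type*} [Fintype α] [Fintype β] [DecidableEq α] [DecidableEq β]
    (A : Matrix α β ℂ) : ℝ :=
  open scoped MatrixOrder in
  ((CFC.sqrt (Aᴴ * A)).trace).re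

/-- Spectral norm (operator norm w.r.t. Euclidean norms). -/
noncomputable def specNorm {α β : Type*} [Fintype α] [Fintype β] [DecidableEq α] [DecidableEq β]
    (A : Matrix α β ℂ) : ℝ :=
  ‖LinearMap.toContinuousLinearMap (Matrix.toEuclideanLin A)‖

/-- Frobenius norm. -/
noncomputable def frobNorm {α β : Type*} [Fintype α] [Fintype β]
    (A : Matrix α β ℂ) : ℝ :=
  Real.sqrt ((Aᴴ * A).trace.re)

/-- Positive semidefinite square root (junk value `0` off the PSD cone). -/
noncomputable def msqrt {α : Type*} [Fintype α] [DecidableEq α]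
    (P : Matrix α α ℂ) : Matrix α α ℂ :=
  open scoped Classical in
  open scoped MatrixOrder in
  if h : P.PosSemidef then CFC.sqrt P else 0

/-- Fidelity `F(P,Q) = ‖√P √Q‖₁`. -/
noncomputable def fid {α : Type*} [Fintype α] [DecidableEq α]
    (P Q : Matrix α α ℂ) : ℝ :=
  traceNorm (msqrt P * msqrt Q)

/-- Partial trace over the second (right) tensor factor. -/
noncomputable def ptraceRight {a b : ℕ} (M : Matrix (Fin a × Fin b) (Fin a × Fin b) ℂ) :
    Matrix (Fin a) (Fin a) ℂ :=
  Matrix.of fun i j => ∑ s : Fin b, M (i, s) (j, s)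

/-- Partial trace over the first (left) tensor factor. -/
noncomputable def ptraceLeft {a b : ℕ} (M : Matrix (Fin a × Fin b) (Fin a × Fin b) ℂ) :
    Matrix (Fin b) (Fin b) ℂ :=
  Matrix.of fun i j => ∑ s : Fin a, M (s, i) (s, j)

/-- `Φ ⊗ id` acting on `L(Cⁿ ⊗ Cᵏ)`. -/
noncomputable def tensorId {n m k : ℕ}
    (Φ : Matrix (Fin n) (Fin n) ℂ → Matrix (Fin m) (Fin m) ℂ)
    (M : Matrix (Fin n × Fin k) (Fin n × Fin k) ℂ) :
    Matrix (Fin m × Fin k) (Fin m × Fin k) ℂ :=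
  Matrix.of fun p q => Φ (Matrix.of fun a c => M (a, p.2) (c, q.2)) p.1 q.1

/-- Completely bounded trace norm `¦¦¦Φ¦¦¦₁ = ‖Φ ⊗ id_{L(Cⁿ)}‖₁`. -/
noncomputable def cbTraceNorm {n m : ℕ}
    (Φ : Matrix (Fin n) (Fin n) ℂ → Matrix (Fin m) (Fin m) ℂ) : ℝ :=
  sSup {c : ℝ | ∃ M : Matrix (Fin n × Fin n) (Fin n × Fin n) ℂ,
    traceNorm M ≤ 1 ∧ c = traceNorm (tensorId Φ M)}

/-- Completely bounded spectral norm of `Ψ : L(Cᵐ) → L(Cⁿ)`, with ancilla `Cⁿ`. -/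
noncomputable def cbSpecNorm {m n : ℕ}
    (Ψ : Matrix (Fin m) (Fin m) ℂ → Matrix (Fin n) (Fin n) ℂ) : ℝ :=
  sSup {c : ℝ | ∃ M : Matrix (Fin m × Fin n) (Fin m × Fin n) ℂ,
    specNorm M ≤ 1 ∧ c = specNorm (tensorId Ψ M)}

/-- Choi–Jamiołkowski representation `J(Φ) = ∑ᵢⱼ Φ(Eᵢⱼ) ⊗ Eᵢⱼ`. -/
noncomputable def choi {n m : ℕ}
    (Φ : Matrix (Fin n) (Fin n) ℂ → Matrix (Fin m) (Fin m) ℂ) :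
    Matrix (Fin m × Fin n) (Fin m × Fin n) ℂ :=
  ∑ i : Fin n, ∑ j : Fin n, (Φ (Matrix.single i j 1)) ⊗ₖ (Matrix.single i j 1)

/-- vec mapping. -/
def vecM {n : ℕ} (A : Matrix (Fin n) (Fin n) ℂ) : Fin n × Fin n → ℂ := fun p => A p.1 p.2


noncomputable abbrev Matrix.PosSemidef.sqrt {α : Type*} [Fintype α] [DecidableEq α]
    {M : Matrix α α ℂ} (_h : M.PosSemidef) : Matrix α α ℂ :=
  open scoped MatrixOrder in
  CFC.sqrt M

lemma Matrix.PosSemidef.posSemidef_sqrt {α : Type*} [Fintype α] [DecidableEq α]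
    {M : Matrix α α ℂ} (h : M.PosSemidef) : h.sqrt.PosSemidef := by
  open scoped MatrixOrder in
  exact (CFC.sqrt_nonneg M).posSemidef

lemma Matrix.PosSemidef.sqrt_mul_self {α : Type*} [Fintype α] [DecidableEq α]
    {M : Matrix α α ℂ} (h : M.PosSemidef) : h.sqrt * h.sqrt = M := by
  open scoped MatrixOrder in
  exact CFC.sqrt_mul_sqrt_self M h.nonneg

section SDPAuxSection
namespace SDPAux
open Matrix
variable {n : Type*} [Fintype n] [DecidableEq n]

/-! ### Functional calculus gadget -/

noncomputable def mfun {S : Matrix n n ℂ} (hS : S.IsHermitian) (f : ℝ → ℝ) : Matrix n n ℂ :=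
  (hS.eigenvectorUnitary : Matrix n n ℂ) * Matrix.diagonal (fun i => (f (hS.eigenvalues i) : ℂ)) *
    (star (hS.eigenvectorUnitary : Matrix n n ℂ))

variable {S : Matrix n n ℂ} (hS : S.IsHermitian)

lemma mfun_mul (f g : ℝ → ℝ) : mfun hS f * mfun hS g = mfun hS (fun x => f x * g x) := by
  unfold mfun
  rw [mul_assoc, mul_assoc, ← mul_assoc (star _ : Matrix n n ℂ), ← mul_assoc (star _ : Matrix n n ℂ),
    (Matrix.mem_unitaryGroup_iff').mp (hS.eigenvectorUnitary).2, one_mul,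
    ← mul_assoc, ← mul_assoc, mul_assoc _ _ (Matrix.diagonal _), diagonal_mul_diagonal]
  congr 2
  ext i
  simp [Complex.ofReal_mul]

lemma mfun_id : mfun hS id = S := by
  rw [mfun]; exact hS.spectral_theorem.symm

lemma mfun_one : mfun hS (fun _ => 1) = 1 := by
  unfold mfun
  simp only [Complex.ofReal_one, diagonal_one, mul_one]
  exact (Matrix.mem_unitaryGroup_iff).mp (hS.eigenvectorUnitary).2

lemma mfun_sub (f g : ℝ → ℝ) : mfun hS f - mfun hS g = mfun hS (fun x => f x - g x) := by
  unfold mfun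
  rw [← Matrix.sub_mul, ← Matrix.mul_sub, diagonal_sub]
  congr 2
  ext i
  push_cast; ring

lemma mfun_isHermitian (f : ℝ → ℝ) : (mfun hS f).IsHermitian := by
  unfold mfun Matrix.IsHermitian
  rw [conjTranspose_mul, conjTranspose_mul, diagonal_conjTranspose, ← star_eq_conjTranspose,
    ← star_eq_conjTranspose, star_star, ← mul_assoc]
  congr 2
  ext i; simp [Pi.star_def]

lemma mfun_posSemidef (f : ℝ → ℝ) (hf : ∀ x, 0 ≤ f x) : (mfun hS f).PosSemidef := by
  unfold mfun
  exact (Matrix.PosSemidef.diagonal (fun i => by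
    simpa using Complex.zero_le_real.2 (hf _))).mul_mul_conjTranspose_same _

lemma mfun_congr {f g : ℝ → ℝ} (h : ∀ x, f x = g x) : mfun hS f = mfun hS g := by
  have : (fun i => (f (hS.eigenvalues i) : ℂ)) = fun i => (g (hS.eigenvalues i) : ℂ) := by
    funext i; rw [h]
  unfold mfun; rw [this]

lemma mfun_zero : mfun hS (fun _ => 0) = 0 := by
  unfold mfun; simp

lemma mfun_mul_matrix (f : ℝ → ℝ) : mfun hS f * S = mfun hS (fun x => f x * x) := by
  have h := mfun_mul hS f id
  rw [mfun_id hS] at h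
  exact h

lemma sq_eq_mfun : S * S = mfun hS (fun x => x * x) := by
  have h := mfun_mul hS id id
  rw [mfun_id hS] at h
  exact h

/-! ### Pseudoinverse and support projection -/

noncomputable def pinv : Matrix n n ℂ := mfun hS (fun x => if x = 0 then 0 else x⁻¹)
noncomputable def pproj : Matrix n n ℂ := mfun hS (fun x => if x = 0 then 0 else 1)

lemma pinv_mul_eq_pproj : pinv hS * S = pproj hS := by
  rw [pinv, mfun_mul_matrix, pproj]
  exact mfun_congr hS fun x => by by_cases h : x = 0 <;> simp [h, inv_mul_cancel₀]

lemma pinv_isHermitian : (pinv hS).IsHermitian := mfun_isHermitian hS _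

lemma one_sub_pproj_eq : 1 - pproj hS = mfun hS (fun x => 1 - if x = 0 then 0 else 1) := by
  rw [← mfun_one hS, pproj, mfun_sub]

lemma one_sub_pproj_posSemidef : (1 - pproj hS).PosSemidef := by
  rw [one_sub_pproj_eq hS]
  exact mfun_posSemidef hS _ fun x => by by_cases h : x = 0 <;> simp [h]

lemma one_sub_pproj_isHermitian : (1 - pproj hS).IsHermitian := by
  rw [one_sub_pproj_eq hS]; exact mfun_isHermitian hS _

lemma sq_mul_one_sub_pproj : (1 - pproj hS) * (S * S) * (1 - pproj hS) = 0 := by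
  rw [sq_eq_mfun hS, one_sub_pproj_eq hS, mfun_mul, mfun_mul, ← mfun_zero hS]
  exact mfun_congr hS fun x => by by_cases h : x = 0 <;> simp [h]

variable {m : Type*} [Fintype m]

lemma mul_pproj_eq_self {C : Matrix m n ℂ} (hC : Cᴴ * C = S * S) : C * pproj hS = C := by
  have hz : (C * (1 - pproj hS))ᴴ * (C * (1 - pproj hS)) = 0 := by
    rw [conjTranspose_mul, (one_sub_pproj_isHermitian hS).eq]
    simp only [← Matrix.mul_assoc]
    rw [Matrix.mul_assoc (1 - pproj hS) Cᴴ C, hC]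
    exact sq_mul_one_sub_pproj hS
  have h1 := conjTranspose_mul_self_eq_zero.mp hz
  have h2 : C * (1 : Matrix n n ℂ) - C * pproj hS = 0 := by rw [← Matrix.mul_sub]; exact h1
  rw [Matrix.mul_one] at h2
  exact (sub_eq_zero.mp h2).symm

lemma factor_through_pinv {C : Matrix m n ℂ} (hC : Cᴴ * C = S * S) :
    (C * pinv hS) * S = C := by
  rw [Matrix.mul_assoc, pinv_mul_eq_pproj, mul_pproj_eq_self hS hC]

lemma contraction_sq_pinv {C : Matrix m n ℂ} (hC : Cᴴ * C = S * S) :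
    (1 - (C * pinv hS)ᴴ * (C * pinv hS)).PosSemidef := by
  have key : (C * pinv hS)ᴴ * (C * pinv hS) = pproj hS := by
    rw [conjTranspose_mul, (pinv_isHermitian hS).eq]
    simp only [← Matrix.mul_assoc]
    rw [Matrix.mul_assoc (pinv hS) Cᴴ C, hC]
    show pinv hS * (S * S) * pinv hS = _
    rw [sq_eq_mfun hS, pinv, mfun_mul, mfun_mul, pproj]
    exact mfun_congr hS fun x => by
      by_cases h : x = 0 <;> simp [h]
  rw [key]
  exact one_sub_pproj_posSemidef hS

/-! ### Euclidean norm and contractions -/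

noncomputable def enorm {ι : Type*} [Fintype ι] (x : ι → ℂ) : ℝ :=
  ‖(WithLp.equiv 2 (ι → ℂ)).symm x‖

lemma enorm_sq {ι : Type*} [Fintype ι] (x : ι → ℂ) :
    enorm x ^ 2 = (dotProduct (star x) x).re := by
  have h : (dotProduct (star x) x) =
      inner ℂ ((WithLp.equiv 2 (ι → ℂ)).symm x) ((WithLp.equiv 2 (ι → ℂ)).symm x) :=
    ((EuclideanSpace.inner_eq_star_dotProduct _ _).trans (dotProduct_comm _ _)).symm
  have h2 := inner_self_eq_norm_sq (𝕜 := ℂ) ((WithLp.equiv 2 (ι → ℂ)).symm x)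
  rw [h]
  simpa [enorm, RCLike.re_to_complex] using h2.symm

lemma re_dot_le {ι : Type*} [Fintype ι] (x y : ι → ℂ) :
    (dotProduct (star x) y).re ≤ enorm x * enorm y := by
  have h : (dotProduct (star x) y) =
      inner ℂ ((WithLp.equiv 2 (ι → ℂ)).symm x) ((WithLp.equiv 2 (ι → ℂ)).symm y) :=
    ((EuclideanSpace.inner_eq_star_dotProduct _ _).trans (dotProduct_comm _ _)).symm
  have h2 := re_inner_le_norm (𝕜 := ℂ) ((WithLp.equiv 2 (ι → ℂ)).symm x)
    ((WithLp.equiv 2 (ι → ℂ)).symm y)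
  rw [h]
  simpa [enorm, RCLike.re_to_complex] using h2

lemma enorm_nonneg' {ι : Type*} [Fintype ι] (x : ι → ℂ) : 0 ≤ enorm x := norm_nonneg _

lemma enorm_mulVec_sq (M : Matrix m n ℂ) (x : n → ℂ) :
    enorm (M *ᵥ x) ^ 2 = (dotProduct (star x) ((Mᴴ * M) *ᵥ x)).re := by
  rw [enorm_sq, star_mulVec]
  congr 1
  rw [dotProduct_mulVec, dotProduct_mulVec, Matrix.vecMul_vecMul]

lemma contraction_of_psd {M : Matrix m n ℂ} (h : (1 - Mᴴ * M).PosSemidef) (x : n → ℂ) :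
    enorm (M *ᵥ x) ≤ enorm x := by
  have h1 : enorm (M *ᵥ x) ^ 2 ≤ enorm x ^ 2 := by
    rw [enorm_mulVec_sq, enorm_sq]
    have := h.re_dotProduct_nonneg x
    simp only [Matrix.sub_mulVec, dotProduct_sub, Matrix.one_mulVec, map_sub,
      RCLike.re_to_complex] at this
    linarith
  nlinarith [enorm_nonneg' (M *ᵥ x), enorm_nonneg' x]

lemma contraction_conjTranspose {M : Matrix m n ℂ} (h : ∀ x, enorm (M *ᵥ x) ≤ enorm x)
    (x : m → ℂ) : enorm (Mᴴ *ᵥ x) ≤ enorm x := by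
  have h1 : dotProduct (star (Mᴴ *ᵥ x)) (Mᴴ *ᵥ x)
      = dotProduct (star x) (M *ᵥ (Mᴴ *ᵥ x)) := by
    rw [star_mulVec]
    simp only [star_eq_conjTranspose, conjTranspose_conjTranspose]
    rw [dotProduct_mulVec, dotProduct_mulVec, dotProduct_mulVec]
  have key : enorm (Mᴴ *ᵥ x) ^ 2 ≤ enorm x * enorm (Mᴴ *ᵥ x) :=
    calc enorm (Mᴴ *ᵥ x) ^ 2 = (dotProduct (star (Mᴴ *ᵥ x)) (Mᴴ *ᵥ x)).re := enorm_sq _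
      _ = (dotProduct (star x) (M *ᵥ (Mᴴ *ᵥ x))).re := by rw [h1]
      _ ≤ enorm x * enorm (M *ᵥ (Mᴴ *ᵥ x)) := re_dot_le _ _
      _ ≤ enorm x * enorm (Mᴴ *ᵥ x) := mul_le_mul_of_nonneg_left (h _) (enorm_nonneg' x)
  nlinarith [enorm_nonneg' (Mᴴ *ᵥ x), enorm_nonneg' x]

/-! ### Trace inequality -/

lemma trace_conj_contraction {r K : Matrix n n ℂ} (hr : r.IsHermitian)
    (hK : ∀ x, enorm (K *ᵥ x) ≤ enorm x) :
    ((r * K * r).trace).re ≤ ((r * r).trace).re := by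
  have hcol : ∀ i : n, (r * K * r) i i
      = dotProduct (star (fun j => r j i)) (K *ᵥ (fun j => r j i)) := by
    intro i
    simp only [Matrix.mul_apply, dotProduct, Matrix.mulVec, Pi.star_apply,
      Finset.sum_mul, Finset.mul_sum]
    rw [Finset.sum_comm]
    refine Finset.sum_congr rfl fun k _ => Finset.sum_congr rfl fun j _ => ?_
    rw [show (star (r k i) : ℂ) = r i k by rw [← Matrix.conjTranspose_apply, hr.eq]]
    ring
  have hcol2 : ∀ i : n, (r * r) i i
      = dotProduct (star (fun j => r j i)) (fun j => r j i) := by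
    intro i
    simp only [Matrix.mul_apply, dotProduct, Pi.star_apply]
    refine Finset.sum_congr rfl fun k _ => ?_
    rw [show (star (r k i) : ℂ) = r i k by rw [← Matrix.conjTranspose_apply, hr.eq]]
  simp only [Matrix.trace, Matrix.diag, Complex.re_sum]
  refine Finset.sum_le_sum fun i _ => ?_
  rw [hcol, hcol2]
  calc (dotProduct (star (fun j => r j i)) (K *ᵥ (fun j => r j i))).re
      ≤ enorm (fun j => r j i) * enorm (K *ᵥ (fun j => r j i)) := re_dot_le _ _
    _ ≤ enorm (fun j => r j i) * enorm (fun j => r j i) :=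
        mul_le_mul_of_nonneg_left (hK _) (enorm_nonneg' _)
    _ = (dotProduct (star (fun j => r j i)) (fun j => r j i)).re := by
        rw [← enorm_sq]; ring

/-! ### Block matrices -/

lemma psd_fromBlocks_zero {D : Matrix n n ℂ} (hD : D.PosSemidef) :
    (Matrix.fromBlocks (0 : Matrix n n ℂ) 0 0 D).PosSemidef := by
  obtain ⟨F, hF⟩ : ∃ F : Matrix n n ℂ, D = Fᴴ * F :=
    ⟨hD.sqrt, by rw [hD.posSemidef_sqrt.isHermitian.eq, hD.sqrt_mul_self]⟩
  have : Matrix.fromBlocks (0 : Matrix n n ℂ) 0 0 D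
      = (Matrix.fromBlocks 0 F 0 0)ᴴ * (Matrix.fromBlocks 0 F 0 0) := by
    rw [fromBlocks_conjTranspose, fromBlocks_multiply]
    simp [hF]
  rw [this]
  exact posSemidef_conjTranspose_mul_self _

lemma feasible_of_contraction {P Q K : Matrix n n ℂ} (hP : P.PosSemidef) (hQ : Q.PosSemidef)
    (hK : (1 - Kᴴ * K).PosSemidef) :
    (Matrix.fromBlocks P (hP.sqrt * K * hQ.sqrt) (hP.sqrt * K * hQ.sqrt)ᴴ Q).PosSemidef := by
  set sP := hP.sqrt with hsP
  set sQ := hQ.sqrt with hsQ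
  have hsPh : sPᴴ = sP := hP.posSemidef_sqrt.isHermitian.eq
  have hsQh : sQᴴ = sQ := hQ.posSemidef_sqrt.isHermitian.eq
  have hE : (sQ * (1 - Kᴴ * K) * sQ).PosSemidef := by
    have := hK.mul_mul_conjTranspose_same sQ
    rwa [hsQh] at this
  have key : Matrix.fromBlocks P (sP * K * sQ) (sP * K * sQ)ᴴ Q
      = (Matrix.fromBlocks sP (K * sQ) 0 0)ᴴ * (Matrix.fromBlocks sP (K * sQ) 0 0)
        + Matrix.fromBlocks 0 0 0 (sQ * (1 - Kᴴ * K) * sQ) := by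
    rw [fromBlocks_conjTranspose, fromBlocks_multiply, fromBlocks_add, fromBlocks_inj]
    refine ⟨?_, ?_, ?_, ?_⟩
    · simp [hsPh]
      exact hP.sqrt_mul_self.symm
    · simp [hsPh, Matrix.mul_assoc]
    · simp [conjTranspose_mul, hsPh, hsQh, Matrix.mul_assoc]
    · rw [conjTranspose_mul, hsQh]
      simp only [conjTranspose_zero, Matrix.zero_mul, add_zero, Matrix.mul_sub, Matrix.sub_mul,
        Matrix.mul_one, Matrix.one_mul]
      rw [hsQ, hQ.sqrt_mul_self]
      simp only [Matrix.mul_assoc]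
      abel
  rw [key]
  exact (posSemidef_conjTranspose_mul_self _).add (psd_fromBlocks_zero hE)

lemma gram_factors {P Q X : Matrix n n ℂ} (hM : (Matrix.fromBlocks P X Xᴴ Q).PosSemidef) :
    ∃ B C : Matrix (n ⊕ n) n ℂ, P = Bᴴ * B ∧ Q = Cᴴ * C ∧ X = Bᴴ * C := by
  set R := hM.sqrt with hR
  have hRR : R * R = Matrix.fromBlocks P X Xᴴ Q := hM.sqrt_mul_self
  have hRh : Rᴴ = R := hM.posSemidef_sqrt.isHermitian.eq
  refine ⟨R.submatrix id Sum.inl, R.submatrix id Sum.inr, ?_, ?_, ?_⟩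
  all_goals {
    ext i j
    first
    | rw [show P i j = (Matrix.fromBlocks P X Xᴴ Q) (Sum.inl i) (Sum.inl j) from rfl, ← hRR]
    | rw [show Q i j = (Matrix.fromBlocks P X Xᴴ Q) (Sum.inr i) (Sum.inr j) from rfl, ← hRR]
    | rw [show X i j = (Matrix.fromBlocks P X Xᴴ Q) (Sum.inl i) (Sum.inr j) from rfl, ← hRR]
    rw [Matrix.mul_apply, Matrix.mul_apply]
    refine Finset.sum_congr rfl fun k _ => ?_
    rw [Matrix.conjTranspose_apply, Matrix.submatrix_apply, Matrix.submatrix_apply,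
      ← Matrix.conjTranspose_apply, hRh]
    simp
  }

lemma re_trace_nonneg {M : Matrix n n ℂ} (hM : M.PosSemidef) : 0 ≤ M.trace.re := by
  rw [Matrix.trace]
  simp only [Matrix.diag, Complex.re_sum]
  refine Finset.sum_nonneg fun i _ => ?_
  have := hM.re_dotProduct_nonneg (Pi.single i 1)
  simpa [dotProduct, Matrix.mulVec, Pi.single_apply, Finset.sum_ite_eq,
    RCLike.re_to_complex] using this

/-! ### Scalar multiples -/

lemma psd_smul {M : Matrix n n ℂ} (hM : M.PosSemidef) {c : ℝ} (hc : 0 ≤ c) :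
    ((c : ℂ) • M).PosSemidef := by
  exact hM.smul (Complex.zero_le_real.2 hc)

lemma smul_one_posDef {c : ℝ} (hc : 0 < c) : ((c : ℂ) • (1 : Matrix n n ℂ)).PosDef := by
  rw [smul_one_eq_diagonal]
  exact posDef_diagonal_iff.mpr fun i => Complex.zero_lt_real.2 hc

lemma reg_identity {T M : Matrix n n ℂ} (c : ℂ) (hNM : (T + c • 1) * M = 1)
    (hMN : M * (T + c • 1) = 1) :
    T * T * M = T - c • 1 + (c^2) • M := by
  have expand : T * T = (T + c • 1) * (T + c • 1) - (2*c) • (T + c • 1) + (c^2) • 1 := by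
    simp only [Matrix.mul_add, Matrix.add_mul, Matrix.smul_mul, Matrix.mul_smul,
      Matrix.one_mul, Matrix.mul_one, smul_smul]
    module
  rw [expand]
  simp only [Matrix.sub_mul, Matrix.add_mul, Matrix.smul_mul, Matrix.mul_assoc, hNM,
    Matrix.one_mul, hMN]
  rw [Matrix.mul_one]
  module

/-! ### The two main bounds -/

set_option maxHeartbeats 1000000 in
theorem upper_bound {P Q X : Matrix n n ℂ} (hP : P.PosSemidef) (hQ : Q.PosSemidef)
    (hM : (Matrix.fromBlocks P X Xᴴ Q).PosSemidef) :
    X.trace.re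
      ≤ (((Matrix.posSemidef_conjTranspose_mul_self (hP.sqrt * hQ.sqrt)).sqrt).trace).re := by
  classical
  obtain ⟨B, C, hPB, hQC, hXB⟩ := gram_factors hM
  set A := hP.sqrt * hQ.sqrt with hA
  set T := (Matrix.posSemidef_conjTranspose_mul_self A).sqrt with hTdef
  have hTpsd : T.PosSemidef := (Matrix.posSemidef_conjTranspose_mul_self A).posSemidef_sqrt
  have hTh : T.IsHermitian := hTpsd.isHermitian
  have hTT : T * T = Aᴴ * A := (Matrix.posSemidef_conjTranspose_mul_self A).sqrt_mul_self
  set S := hQ.sqrt with hSdef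
  have hSh : S.IsHermitian := hQ.posSemidef_sqrt.isHermitian
  have hCS : Cᴴ * C = S * S := by rw [hSdef, hQ.sqrt_mul_self]; exact hQC.symm
  set V := C * pinv hSh with hV
  have hVS : V * S = C := factor_through_pinv hSh hCS
  have hVc : (1 - Vᴴ * V).PosSemidef := contraction_sq_pinv hSh hCS
  set D := B * S with hD
  have hDh : Dᴴ = S * Bᴴ := by rw [hD, conjTranspose_mul, hSh.eq]
  have hL : Dᴴ * D = S * (Bᴴ * B) * S := by
    rw [hDh, hD]; simp only [Matrix.mul_assoc]
  have hR : Aᴴ * A = S * (Bᴴ * B) * S := by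
    rw [← hPB, hA, conjTranspose_mul, hP.posSemidef_sqrt.isHermitian.eq,
      hQ.posSemidef_sqrt.isHermitian.eq, ← hSdef]
    rw [Matrix.mul_assoc, ← Matrix.mul_assoc hP.sqrt hP.sqrt S, hP.sqrt_mul_self,
      ← Matrix.mul_assoc]
  have hDD : Dᴴ * D = T * T := by rw [hL, hTT, hR]
  set W := D * pinv hTh with hW
  have hWT : W * T = D := factor_through_pinv hTh hDD
  have hWc : (1 - Wᴴ * W).PosSemidef := contraction_sq_pinv hTh hDD
  set Kc := Wᴴ * V with hKc
  have hKcontr : ∀ x, enorm (Kc *ᵥ x) ≤ enorm x := by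
    intro x
    rw [hKc, ← Matrix.mulVec_mulVec]
    exact (contraction_conjTranspose (contraction_of_psd hWc) _).trans
      (contraction_of_psd hVc x)
  have htr : X.trace = (T * Kc).trace := by
    rw [hXB, ← hVS, ← Matrix.mul_assoc, Matrix.trace_mul_comm, ← Matrix.mul_assoc, ← hDh,
      ← hWT, conjTranspose_mul, hTh.eq, Matrix.mul_assoc]
  set r := hTpsd.sqrt with hr
  have hrr : r * r = T := hTpsd.sqrt_mul_self
  have hrh : r.IsHermitian := hTpsd.posSemidef_sqrt.isHermitian
  have hcyc : (T * Kc).trace = (r * Kc * r).trace := by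
    rw [← hrr]; exact (Matrix.trace_mul_cycle r Kc r).symm
  calc X.trace.re = (r * Kc * r).trace.re := by rw [htr, hcyc]
    _ ≤ (r * r).trace.re := trace_conj_contraction hrh hKcontr
    _ = T.trace.re := by rw [hrr]

set_option maxHeartbeats 1000000 in
theorem achievable {P Q : Matrix n n ℂ} (hP : P.PosSemidef) (hQ : Q.PosSemidef)
    {ε : ℝ} (hε : 0 < ε) :
    ∃ X : Matrix n n ℂ, (Matrix.fromBlocks P X Xᴴ Q).PosSemidef ∧
      (((Matrix.posSemidef_conjTranspose_mul_self (hP.sqrt * hQ.sqrt)).sqrt).trace).re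
        - (Fintype.card n) * ε ≤ X.trace.re := by
  classical
  set A := hP.sqrt * hQ.sqrt with hA
  set T := (Matrix.posSemidef_conjTranspose_mul_self A).sqrt with hTdef
  have hTpsd : T.PosSemidef := (Matrix.posSemidef_conjTranspose_mul_self A).posSemidef_sqrt
  have hTT : T * T = Aᴴ * A := (Matrix.posSemidef_conjTranspose_mul_self A).sqrt_mul_self
  set N := T + (ε : ℂ) • 1 with hN
  have hNpd : N.PosDef := Matrix.PosDef.posSemidef_add hTpsd (smul_one_posDef hε)
  have hdet : IsUnit N.det := isUnit_iff_ne_zero.mpr hNpd.det_pos.ne'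
  have hNM : N * N⁻¹ = 1 := Matrix.mul_nonsing_inv _ hdet
  have hMN : N⁻¹ * N = 1 := Matrix.nonsing_inv_mul _ hdet
  have hNinvH : N⁻¹.IsHermitian := hNpd.isHermitian.inv
  have hNinvPSD : N⁻¹.PosSemidef := hNpd.inv.posSemidef
  set K := A * N⁻¹ with hK
  have hKK : Kᴴ * K = N⁻¹ * (T * T) * N⁻¹ := by
    rw [hK, conjTranspose_mul, hNinvH.eq]
    simp only [← Matrix.mul_assoc]
    rw [Matrix.mul_assoc N⁻¹ Aᴴ A, ← hTT]
    simp only [Matrix.mul_assoc]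
  have hNN1 : N⁻¹ * (N * N) * N⁻¹ = 1 := by
    rw [← Matrix.mul_assoc N⁻¹ N N, hMN, Matrix.one_mul, hNM]
  have hexp : N * N = T * T + ((2*ε : ℝ) : ℂ) • T + ((ε^2 : ℝ) : ℂ) • 1 := by
    rw [hN]
    push_cast
    simp only [Matrix.mul_add, Matrix.add_mul, Matrix.smul_mul, Matrix.mul_smul,
      Matrix.mul_one, Matrix.one_mul, smul_smul]
    module
  have hG : (1 : Matrix n n ℂ) - Kᴴ * K
      = N⁻¹ * (((2*ε : ℝ) : ℂ) • T + ((ε^2 : ℝ) : ℂ) • 1) * N⁻¹ := by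
    rw [hKK]
    calc (1 : Matrix n n ℂ) - N⁻¹ * (T * T) * N⁻¹
        = N⁻¹ * (N * N) * N⁻¹ - N⁻¹ * (T * T) * N⁻¹ := by rw [hNN1]
      _ = N⁻¹ * (N * N - T * T) * N⁻¹ := by
          simp only [Matrix.mul_sub, Matrix.sub_mul]
      _ = _ := by
          rw [hexp]
          congr 2
          abel
  have hKcon : ((1 : Matrix n n ℂ) - Kᴴ * K).PosSemidef := by
    rw [hG]
    have hGpsd : ((((2*ε : ℝ) : ℂ)) • T + (((ε^2 : ℝ) : ℂ)) • 1).PosSemidef :=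
      (psd_smul hTpsd (by positivity)).add (psd_smul Matrix.PosSemidef.one (sq_nonneg ε))
    have := hGpsd.mul_mul_conjTranspose_same N⁻¹
    rwa [hNinvH.eq] at this
  refine ⟨hP.sqrt * K * hQ.sqrt, feasible_of_contraction hP hQ hKcon, ?_⟩
  have hAh : Aᴴ = hQ.sqrt * hP.sqrt := by
    rw [hA, conjTranspose_mul, hP.posSemidef_sqrt.isHermitian.eq,
      hQ.posSemidef_sqrt.isHermitian.eq]
  have htr : (hP.sqrt * K * hQ.sqrt).trace = (T * T * N⁻¹).trace := by
    rw [Matrix.trace_mul_cycle]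
    have hmm : hQ.sqrt * hP.sqrt * K = T * T * N⁻¹ := by
      rw [← hAh, hK, hTT, ← Matrix.mul_assoc]
    rw [hmm]
  have hid : T * T * N⁻¹ = T - (ε : ℂ) • 1 + ((ε : ℂ)^2) • N⁻¹ :=
    reg_identity ((ε : ℂ)) (by rw [← hN]; exact hNM) (by rw [← hN]; exact hMN)
  have hfin : (hP.sqrt * K * hQ.sqrt).trace
      = T.trace - (ε : ℂ) * (Fintype.card n) + ((ε : ℂ)^2) * N⁻¹.trace := by
    rw [htr, hid, Matrix.trace_add, Matrix.trace_sub, Matrix.trace_smul, Matrix.trace_smul,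
      Matrix.trace_one, smul_eq_mul, smul_eq_mul]
  have hretr : 0 ≤ N⁻¹.trace.re := re_trace_nonneg hNinvPSD
  rw [hfin]
  have h1 : ((ε : ℂ) * (Fintype.card n)).re = ε * (Fintype.card n) := by
    simp [Complex.mul_re]
  have h2 : (((ε : ℂ)^2) * N⁻¹.trace).re = ε^2 * N⁻¹.trace.re := by
    rw [show ((ε : ℂ)^2) = ((ε^2 : ℝ) : ℂ) by push_cast; ring]
    exact Complex.re_ofReal_mul _ _
  simp only [Complex.add_re, Complex.sub_re, h1, h2]
  nlinarith [sq_nonneg ε]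

end SDPAux
end SDPAuxSection

/-- SDP primal characterization of fidelity. -/
theorem stmt1 {n : ℕ} (P Q : Matrix (Fin n) (Fin n) ℂ)
    (hP : P.PosSemidef) (hQ : Q.PosSemidef) :
    fid P Q = sSup {c : ℝ | ∃ X : Matrix (Fin n) (Fin n) ℂ,
      (Matrix.fromBlocks P X Xᴴ Q).PosSemidef ∧
      c = (X.trace / 2 + Xᴴ.trace / 2).re} := by
  classical
  have hfid : fid P Q
      = (((Matrix.posSemidef_conjTranspose_mul_self (hP.sqrt * hQ.sqrt)).sqrt).trace).re := by
    have h1 : msqrt P = hP.sqrt := dif_pos hP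
    have h2 : msqrt Q = hQ.sqrt := dif_pos hQ
    rw [fid, h1, h2, traceNorm]
  have hval : ∀ X : Matrix (Fin n) (Fin n) ℂ,
      (X.trace / 2 + Xᴴ.trace / 2).re = X.trace.re := by
    intro X
    rw [Matrix.trace_conjTranspose]
    have : X.trace / 2 + (star X.trace) / 2 = ((X.trace.re : ℝ) : ℂ) := by
      rw [← add_div, Complex.star_def, Complex.add_conj]
      push_cast
      ring
    rw [this, Complex.ofReal_re]
  set Sset := {c : ℝ | ∃ X : Matrix (Fin n) (Fin n) ℂ,
      (Matrix.fromBlocks P X Xᴴ Q).PosSemidef ∧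
      c = (X.trace / 2 + Xᴴ.trace / 2).re} with hSset
  have hub : ∀ c ∈ Sset, c ≤ fid P Q := by
    rintro c ⟨X, hXf, rfl⟩
    rw [hval, hfid]
    exact SDPAux.upper_bound hP hQ hXf
  have hbdd : BddAbove Sset := ⟨fid P Q, hub⟩
  refine le_antisymm ?_ ?_
  · refine le_of_forall_pos_le_add fun ε hε => ?_
    set ε' := ε / (Fintype.card (Fin n) + 1) with hε'def
    have hε' : 0 < ε' := by positivity
    obtain ⟨X, hfeas, hge⟩ := SDPAux.achievable hP hQ hε'
    have hmem : X.trace.re ∈ Sset := ⟨X, hfeas, (hval X).symm⟩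
    have hle := le_csSup hbdd hmem
    have harith : (Fintype.card (Fin n) : ℝ) * ε' ≤ ε := by
      rw [hε'def]
      have hc1 : (0 : ℝ) < (Fintype.card (Fin n) : ℝ) + 1 := by positivity
      calc (Fintype.card (Fin n) : ℝ) * (ε / ((Fintype.card (Fin n) : ℝ) + 1))
          ≤ ((Fintype.card (Fin n) : ℝ) + 1) * (ε / ((Fintype.card (Fin n) : ℝ) + 1)) := by
            apply mul_le_mul_of_nonneg_right (by linarith) (by positivity)
        _ = ε := by field_simp
    rw [hfid]
    linarith
  · refine Real.sSup_le hub ?_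
    rw [hfid]
    exact SDPAux.re_trace_nonneg
      (Matrix.posSemidef_conjTranspose_mul_self (hP.sqrt * hQ.sqrt)).posSemidef_sqrt
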